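/- For all integers c ≥ 0 and i ≥ 0, setting k = c + i, the average-case PAR with respect to party 2 of the bounded-bisection-auction tiling T_{c,i} for the function A_k equals (c+5)/4 − 1/2^{c+2} + c/2^{k+2}. -/

import Mathlib

open Finset

/-- The value space `{0,…,2^k−1} × {0,…,2^k−1}`. -/
def Vk (k : ℕ) : Finset (ℕ × ℕ) := Finset.range (2 ^ k) ×ˢ Finset.range (2 ^ k)

/-- A tiling of `Vk k`: a finite collection of nonempty rectangles partitioning `Vk k`. -/
def IsTiling (k : ℕ) (T : Finset (Finset (ℕ × ℕ))) : Prop :=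
  (∀ R ∈ T, ∃ S S' : Finset ℕ, R = S ×ˢ S') ∧
    (∀ R ∈ T, R.Nonempty) ∧ (∀ R ∈ T, R ⊆ Vk k) ∧ ∀ x ∈ Vk k, ∃! R, R ∈ T ∧ x ∈ R

/-- `f`-monochromaticity of a tiling. -/
def Mono {β : Type} (f : ℕ × ℕ → β) (T : Finset (Finset (ℕ × ℕ))) : Prop :=
  ∀ R ∈ T, ∀ x ∈ R, ∀ y ∈ R, f x = f y

/-- The tile of `T` containing `x` (union of all tiles containing `x`; for a
tiling this is exactly the unique tile containing `x`). -/
def tileOf (T : Finset (Finset (ℕ × ℕ))) (x : ℕ × ℕ) : Finset (ℕ × ℕ) :=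
  (T.filter fun R => x ∈ R).sup id

/-- The ideal region of `x`: the level set of `f x` inside `Vk k`. -/
def ideal {β : Type} [DecidableEq β] (k : ℕ) (f : ℕ × ℕ → β) (x : ℕ × ℕ) : Finset (ℕ × ℕ) :=
  (Vk k).filter fun y => f y = f x

/-- Average-case objective PAR of a tiling w.r.t. the uniform distribution. -/
def avgObjPAR {β : Type} [DecidableEq β] (k : ℕ) (f : ℕ × ℕ → β)
    (T : Finset (Finset (ℕ × ℕ))) : ℚ :=
  (∑ x ∈ Vk k, ((ideal k f x).card : ℚ) / ((tileOf T x).card : ℚ)) / 2 ^ (2 * k)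

/-- Average-case PAR with respect to party 1. -/
def avgPAR1 {β : Type} [DecidableEq β] (k : ℕ) (f : ℕ × ℕ → β)
    (T : Finset (Finset (ℕ × ℕ))) : ℚ :=
  (∑ x ∈ Vk k,
      (((Finset.range (2 ^ k)).filter fun y => f (x.1, y) = f x).card : ℚ) /
        (((Finset.range (2 ^ k)).filter fun y => (x.1, y) ∈ tileOf T x).card : ℚ)) /
    2 ^ (2 * k)

/-- Average-case PAR with respect to party 2. -/
def avgPAR2 {β : Type} [DecidableEq β] (k : ℕ) (f : ℕ × ℕ → β)
    (T : Finset (Finset (ℕ × ℕ))) : ℚ :=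
  (∑ x ∈ Vk k,
      (((Finset.range (2 ^ k)).filter fun y => f (y, x.2) = f x).card : ℚ) /
        (((Finset.range (2 ^ k)).filter fun y => (y, x.2) ∈ tileOf T x).card : ℚ)) /
    2 ^ (2 * k)

/-- The millionaires function: `1` if `x1 ≥ x2`, else `2`. -/
def Mil (x : ℕ × ℕ) : ℕ := if x.2 ≤ x.1 then 1 else 2

/-- The second-price auction function. -/
def Auc (x : ℕ × ℕ) : ℕ × ℕ := if x.2 ≤ x.1 then (1, x.2) else (2, x.1)

/-- Translate a tile by `(a, a)`. -/
def shiftTile (a : ℕ) (R : Finset (ℕ × ℕ)) : Finset (ℕ × ℕ) :=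
  R.image fun p => (p.1 + a, p.2 + a)

/-- The bisection-protocol tiling `B_k`. -/
def Btile : ℕ → Finset (Finset (ℕ × ℕ))
  | 0 => {{(0, 0)}}
  | j + 1 =>
    Btile j ∪ (Btile j).image (shiftTile (2 ^ j)) ∪
      {Finset.range (2 ^ j) ×ˢ Finset.Ico (2 ^ j) (2 ^ (j + 1)),
        Finset.Ico (2 ^ j) (2 ^ (j + 1)) ×ˢ Finset.range (2 ^ j)}

/-- The bounded-bisection-auction tiling `T_{c,i}`. -/
def BBA : ℕ → ℕ → Finset (Finset (ℕ × ℕ))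
  | 0, i =>
    (Finset.range (2 ^ i)).image (fun p => Finset.Ico p (2 ^ i) ×ˢ ({p} : Finset ℕ)) ∪
      (Finset.range (2 ^ i - 1)).image fun p => ({p} : Finset ℕ) ×ˢ Finset.Ico (p + 1) (2 ^ i)
  | c + 1, i =>
    BBA c i ∪ (BBA c i).image (shiftTile (2 ^ (c + i))) ∪
      (Finset.range (2 ^ (c + i))).image
        (fun j => Finset.Ico (2 ^ (c + i)) (2 ^ (c + i + 1)) ×ˢ ({j} : Finset ℕ)) ∪
      (Finset.range (2 ^ (c + i))).image fun j =>
        ({j} : Finset ℕ) ×ˢ Finset.Ico (2 ^ (c + i)) (2 ^ (c + i + 1))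

/-- The public-good function: `true` iff `x1 + x2 ≥ 2^k − 1` ("Build"). -/
def PG (k : ℕ) (x : ℕ × ℕ) : Bool := decide (2 ^ k - 1 ≤ x.1 + x.2)

/-- The truthful public-good function: `none` = "Do Not Build". -/
def TPG (c : ℕ) (x : ℕ × ℕ) : Option (ℕ × ℕ) :=
  if x.1 + x.2 < c then none else some (c - x.2, c - x.1)

/-- The tiling of `Vk k` into singleton cells (sealed-bid auction). -/
def sealedTiling (k : ℕ) : Finset (Finset (ℕ × ℕ)) :=
  (Vk k).image fun x => ({x} : Finset (ℕ × ℕ))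
namespace Stmt15

/-- First factor (set of `x1` values) of the tile of `T_{c,i}` containing `x`. -/
def tile1 : ℕ → ℕ → ℕ × ℕ → Finset ℕ
  | 0, i, x => if x.2 ≤ x.1 then Finset.Ico x.2 (2 ^ i) else {x.1}
  | c + 1, i, x =>
    if x.1 < 2 ^ (c + i) then
      (if x.2 < 2 ^ (c + i) then tile1 c i x else {x.1})
    else
      (if x.2 < 2 ^ (c + i) then Finset.Ico (2 ^ (c + i)) (2 ^ (c + i + 1))
       else (tile1 c i (x.1 - 2 ^ (c + i), x.2 - 2 ^ (c + i))).image (· + 2 ^ (c + i)))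

/-- Second factor of the tile of `T_{c,i}` containing `x`. -/
def tile2 : ℕ → ℕ → ℕ × ℕ → Finset ℕ
  | 0, i, x => if x.2 ≤ x.1 then {x.2} else Finset.Ico (x.1 + 1) (2 ^ i)
  | c + 1, i, x =>
    if x.2 < 2 ^ (c + i) then
      (if x.1 < 2 ^ (c + i) then tile2 c i x else {x.2})
    else
      (if x.1 < 2 ^ (c + i) then Finset.Ico (2 ^ (c + i)) (2 ^ (c + i + 1))
       else (tile2 c i (x.1 - 2 ^ (c + i), x.2 - 2 ^ (c + i))).image (· + 2 ^ (c + i)))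

/-- Width of the tile containing `x`. -/
def wfun : ℕ → ℕ → ℕ × ℕ → ℕ
  | 0, i, x => if x.2 ≤ x.1 then 2 ^ i - x.2 else 1
  | c + 1, i, x =>
    if x.1 < 2 ^ (c + i) then (if x.2 < 2 ^ (c + i) then wfun c i x else 1)
    else (if x.2 < 2 ^ (c + i) then 2 ^ (c + i)
          else wfun c i (x.1 - 2 ^ (c + i), x.2 - 2 ^ (c + i)))

lemma pow_succ_add (c i : ℕ) : 2 ^ (c + i + 1) = 2 ^ (c + i) + 2 ^ (c + i) := by
  rw [pow_succ]; omega

lemma pow_add_one_add (c i : ℕ) : 2 ^ (c + 1 + i) = 2 ^ (c + i) + 2 ^ (c + i) := by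
  have : c + 1 + i = c + i + 1 := by omega
  rw [this, pow_succ]; omega

lemma card_tile1 (c i : ℕ) (x : ℕ × ℕ) : (tile1 c i x).card = wfun c i x := by
  induction c generalizing x with
  | zero =>
    by_cases h : x.2 ≤ x.1 <;> simp [tile1, wfun, h]
  | succ c ih =>
    have hp := pow_succ_add c i
    by_cases h1 : x.1 < 2 ^ (c + i) <;> by_cases h2 : x.2 < 2 ^ (c + i) <;>
      simp [tile1, wfun, h1, h2, Finset.card_image_of_injective _ (add_left_injective _), ih] <;>
      omega

lemma wfun_pos (c i : ℕ) (x : ℕ × ℕ) (h1 : x.1 < 2 ^ (c + i)) (h2 : x.2 < 2 ^ (c + i)) :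
    0 < wfun c i x := by
  induction c generalizing x with
  | zero =>
    have hz : 2 ^ (0 + i) = 2 ^ i := by rw [Nat.zero_add]
    by_cases h : x.2 ≤ x.1 <;> simp [wfun, h] <;> omega
  | succ c ih =>
    have hp := pow_add_one_add c i
    by_cases hx1 : x.1 < 2 ^ (c + i) <;> by_cases hx2 : x.2 < 2 ^ (c + i) <;>
      simp only [wfun, hx1, hx2, if_true, if_false, ite_true, ite_false]
    · exact ih x hx1 hx2
    · omega
    · positivity
    · exact ih _ (by omega) (by omega)

lemma mem_shiftTile (a : ℕ) (R : Finset (ℕ × ℕ)) (p : ℕ × ℕ) :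
    p ∈ shiftTile a R ↔ a ≤ p.1 ∧ a ≤ p.2 ∧ (p.1 - a, p.2 - a) ∈ R := by
  simp only [shiftTile, Finset.mem_image, Prod.exists]
  constructor
  · rintro ⟨u, v, h, rfl⟩
    refine ⟨by simp, by simp, ?_⟩
    simpa using h
  · rintro ⟨h1, h2, h⟩
    exact ⟨p.1 - a, p.2 - a, h, by rw [Prod.ext_iff]; constructor <;> simp <;> omega⟩

lemma shiftTile_prod (a : ℕ) (S T : Finset ℕ) :
    shiftTile a (S ×ˢ T) = (S.image (· + a)) ×ˢ (T.image (· + a)) := by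
  ext ⟨u, v⟩
  rw [mem_shiftTile]
  simp only [Finset.mem_product, Finset.mem_image]
  constructor
  · rintro ⟨h1, h2, hu, hv⟩
    exact ⟨⟨u - a, hu, by omega⟩, ⟨v - a, hv, by omega⟩⟩
  · rintro ⟨⟨s, hs, rfl⟩, ⟨t, ht, rfl⟩⟩
    simpa using ⟨hs, ht⟩

lemma BBA_subset (c i : ℕ) : ∀ R ∈ BBA c i, ∀ p ∈ R, p.1 < 2 ^ (c + i) ∧ p.2 < 2 ^ (c + i) := by
  induction c with
  | zero =>
    intro R hR p hp
    have hz : 2 ^ (0 + i) = 2 ^ i := by rw [Nat.zero_add]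
    simp only [BBA, Finset.mem_union, Finset.mem_image, Finset.mem_range] at hR
    rcases hR with ⟨q, hq, rfl⟩ | ⟨q, hq, rfl⟩ <;>
      simp only [Finset.mem_product, Finset.mem_Ico, Finset.mem_singleton] at hp <;> omega
  | succ c ih =>
    intro R hR p hp
    have hp2 := pow_add_one_add c i
    have hp3 := pow_succ_add c i
    simp only [BBA, Finset.mem_union, Finset.mem_image, Finset.mem_range] at hR
    rcases hR with ((hR | ⟨R', hR', rfl⟩) | ⟨j, hj, rfl⟩) | ⟨j, hj, rfl⟩
    · have := ih R hR p hp; omega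
    · rw [mem_shiftTile] at hp
      have := ih R' hR' _ hp.2.2
      simp only at this
      omega
    · simp only [Finset.mem_product, Finset.mem_Ico, Finset.mem_singleton] at hp
      omega
    · simp only [Finset.mem_product, Finset.mem_Ico, Finset.mem_singleton] at hp
      omega

end Stmt15
namespace Stmt15

lemma filter_BBA (c i : ℕ) : ∀ x : ℕ × ℕ, x.1 < 2 ^ (c + i) → x.2 < 2 ^ (c + i) →
    (BBA c i).filter (fun R => x ∈ R) = {tile1 c i x ×ˢ tile2 c i x} := by
  induction c with
  | zero =>
    intro x hx1 hx2
    have hz : 2 ^ (0 + i) = 2 ^ i := by rw [Nat.zero_add]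
    ext R
    simp only [Finset.mem_filter, Finset.mem_singleton, BBA, Finset.mem_union, Finset.mem_image,
      Finset.mem_range]
    constructor
    · rintro ⟨⟨p, hp, rfl⟩ | ⟨p, hp, rfl⟩, hx⟩
      · simp only [Finset.mem_product, Finset.mem_Ico, Finset.mem_singleton, true_and, and_true] at hx
        obtain ⟨⟨hpx, hxi⟩, hx2p⟩ := hx
        have hle : x.2 ≤ x.1 := by omega
        rw [← hx2p]
        simp [tile1, tile2, hle]
      · simp only [Finset.mem_product, Finset.mem_Ico, Finset.mem_singleton, true_and, and_true] at hx
        obtain ⟨hx1p, hpx, hxi⟩ := hx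
        have hle : ¬ x.2 ≤ x.1 := by omega
        rw [← hx1p]
        simp [tile1, tile2, hle]
    · rintro rfl
      by_cases hle : x.2 ≤ x.1
      · refine ⟨Or.inl ⟨x.2, by omega, by simp [tile1, tile2, hle]⟩, ?_⟩
        simp only [tile1, tile2, Finset.mem_product]
        rw [if_pos hle, if_pos hle]
        simp only [Finset.mem_Ico, Finset.mem_singleton, true_and, and_true]
        omega
      · refine ⟨Or.inr ⟨x.1, by omega, by simp [tile1, tile2, hle]⟩, ?_⟩
        simp only [tile1, tile2, Finset.mem_product]
        rw [if_neg hle, if_neg hle]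
        simp only [Finset.mem_Ico, Finset.mem_singleton, true_and, and_true]
        omega
  | succ c ih =>
    intro x hx1 hx2
    have hp := pow_add_one_add c i
    have hp' := pow_succ_add c i
    simp only [BBA]
    rw [Finset.filter_union, Finset.filter_union, Finset.filter_union]
    by_cases h1 : x.1 < 2 ^ (c + i) <;> by_cases h2 : x.2 < 2 ^ (c + i)
    · -- lower-left quadrant
      have t1 : tile1 (c + 1) i x = tile1 c i x := by simp [tile1, h1, h2]
      have t2 : tile2 (c + 1) i x = tile2 c i x := by simp [tile2, h1, h2]
      have e1 := ih x h1 h2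
      have e2 : ((BBA c i).image (shiftTile (2 ^ (c + i)))).filter (fun R => x ∈ R) = ∅ := by
        rw [Finset.filter_eq_empty_iff]
        rintro R hR
        obtain ⟨R', _, rfl⟩ := Finset.mem_image.mp hR
        rw [mem_shiftTile]; omega
      have e3 : (((Finset.range (2 ^ (c + i))).image
          (fun j => Finset.Ico (2 ^ (c + i)) (2 ^ (c + i + 1)) ×ˢ ({j} : Finset ℕ)))).filter
          (fun R => x ∈ R) = ∅ := by
        rw [Finset.filter_eq_empty_iff]
        rintro R hR
        obtain ⟨j, hj, rfl⟩ := Finset.mem_image.mp hR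
        rw [Finset.mem_range] at hj
        simp only [Finset.mem_product, Finset.mem_Ico, Finset.mem_singleton, true_and, and_true]
        omega
      have e4 : (((Finset.range (2 ^ (c + i))).image
          (fun j => ({j} : Finset ℕ) ×ˢ Finset.Ico (2 ^ (c + i)) (2 ^ (c + i + 1))))).filter
          (fun R => x ∈ R) = ∅ := by
        rw [Finset.filter_eq_empty_iff]
        rintro R hR
        obtain ⟨j, hj, rfl⟩ := Finset.mem_image.mp hR
        rw [Finset.mem_range] at hj
        simp only [Finset.mem_product, Finset.mem_Ico, Finset.mem_singleton, true_and, and_true]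
        omega
      rw [e1, e2, e3, e4, t1, t2]
      simp
    · -- upper-left: x.1 < m ≤ x.2
      have t1 : tile1 (c + 1) i x = {x.1} := by simp [tile1, h1, h2]
      have t2 : tile2 (c + 1) i x = Finset.Ico (2 ^ (c + i)) (2 ^ (c + i + 1)) := by
        simp [tile2, h1, h2]
      have e1 : (BBA c i).filter (fun R => x ∈ R) = ∅ := by
        rw [Finset.filter_eq_empty_iff]
        intro R hR hxR
        exact h2 (BBA_subset c i R hR x hxR).2
      have e2 : ((BBA c i).image (shiftTile (2 ^ (c + i)))).filter (fun R => x ∈ R) = ∅ := by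
        rw [Finset.filter_eq_empty_iff]
        rintro R hR
        obtain ⟨R', _, rfl⟩ := Finset.mem_image.mp hR
        rw [mem_shiftTile]; omega
      have e3 : (((Finset.range (2 ^ (c + i))).image
          (fun j => Finset.Ico (2 ^ (c + i)) (2 ^ (c + i + 1)) ×ˢ ({j} : Finset ℕ)))).filter
          (fun R => x ∈ R) = ∅ := by
        rw [Finset.filter_eq_empty_iff]
        rintro R hR
        obtain ⟨j, hj, rfl⟩ := Finset.mem_image.mp hR
        rw [Finset.mem_range] at hj
        simp only [Finset.mem_product, Finset.mem_Ico, Finset.mem_singleton, true_and, and_true]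
        omega
      have e4 : (((Finset.range (2 ^ (c + i))).image
          (fun j => ({j} : Finset ℕ) ×ˢ Finset.Ico (2 ^ (c + i)) (2 ^ (c + i + 1))))).filter
          (fun R => x ∈ R) =
          {({x.1} : Finset ℕ) ×ˢ Finset.Ico (2 ^ (c + i)) (2 ^ (c + i + 1))} := by
        ext R
        simp only [Finset.mem_filter, Finset.mem_image, Finset.mem_range, Finset.mem_singleton]
        constructor
        · rintro ⟨⟨j, hj, rfl⟩, hxR⟩
          simp only [Finset.mem_product, Finset.mem_Ico, Finset.mem_singleton, true_and, and_true] at hxR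
          rw [hxR.1]
        · rintro rfl
          refine ⟨⟨x.1, by omega, rfl⟩, ?_⟩
          simp only [Finset.mem_product, Finset.mem_Ico, Finset.mem_singleton, true_and, and_true]
          omega
      rw [e1, e2, e3, e4, t1, t2]
      simp
    · -- lower-right: x.2 < m ≤ x.1
      have t1 : tile1 (c + 1) i x = Finset.Ico (2 ^ (c + i)) (2 ^ (c + i + 1)) := by
        simp [tile1, h1, h2]
      have t2 : tile2 (c + 1) i x = {x.2} := by simp [tile2, h1, h2]
      have e1 : (BBA c i).filter (fun R => x ∈ R) = ∅ := by
        rw [Finset.filter_eq_empty_iff]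
        intro R hR hxR
        exact h1 (BBA_subset c i R hR x hxR).1
      have e2 : ((BBA c i).image (shiftTile (2 ^ (c + i)))).filter (fun R => x ∈ R) = ∅ := by
        rw [Finset.filter_eq_empty_iff]
        rintro R hR
        obtain ⟨R', _, rfl⟩ := Finset.mem_image.mp hR
        rw [mem_shiftTile]; omega
      have e3 : (((Finset.range (2 ^ (c + i))).image
          (fun j => Finset.Ico (2 ^ (c + i)) (2 ^ (c + i + 1)) ×ˢ ({j} : Finset ℕ)))).filter
          (fun R => x ∈ R) =
          {Finset.Ico (2 ^ (c + i)) (2 ^ (c + i + 1)) ×ˢ ({x.2} : Finset ℕ)} := by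
        ext R
        simp only [Finset.mem_filter, Finset.mem_image, Finset.mem_range, Finset.mem_singleton]
        constructor
        · rintro ⟨⟨j, hj, rfl⟩, hxR⟩
          simp only [Finset.mem_product, Finset.mem_Ico, Finset.mem_singleton, true_and, and_true] at hxR
          rw [hxR.2]
        · rintro rfl
          refine ⟨⟨x.2, by omega, rfl⟩, ?_⟩
          simp only [Finset.mem_product, Finset.mem_Ico, Finset.mem_singleton, true_and, and_true]
          omega
      have e4 : (((Finset.range (2 ^ (c + i))).image
          (fun j => ({j} : Finset ℕ) ×ˢ Finset.Ico (2 ^ (c + i)) (2 ^ (c + i + 1))))).filter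
          (fun R => x ∈ R) = ∅ := by
        rw [Finset.filter_eq_empty_iff]
        rintro R hR
        obtain ⟨j, hj, rfl⟩ := Finset.mem_image.mp hR
        rw [Finset.mem_range] at hj
        simp only [Finset.mem_product, Finset.mem_Ico, Finset.mem_singleton, true_and, and_true]
        omega
      rw [e1, e2, e3, e4, t1, t2]
      simp
    · -- upper-right quadrant
      have t1 : tile1 (c + 1) i x =
          (tile1 c i (x.1 - 2 ^ (c + i), x.2 - 2 ^ (c + i))).image (· + 2 ^ (c + i)) := by
        simp [tile1, h1, h2]
      have t2 : tile2 (c + 1) i x =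
          (tile2 c i (x.1 - 2 ^ (c + i), x.2 - 2 ^ (c + i))).image (· + 2 ^ (c + i)) := by
        simp [tile2, h1, h2]
      have hsml := ih (x.1 - 2 ^ (c + i), x.2 - 2 ^ (c + i)) (by simp; omega) (by simp; omega)
      have htm : (tile1 c i (x.1 - 2 ^ (c + i), x.2 - 2 ^ (c + i)) ×ˢ
          tile2 c i (x.1 - 2 ^ (c + i), x.2 - 2 ^ (c + i))) ∈
          (BBA c i).filter (fun R => (x.1 - 2 ^ (c + i), x.2 - 2 ^ (c + i)) ∈ R) := by
        rw [hsml]; exact Finset.mem_singleton_self _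
      obtain ⟨htm2, hxm⟩ := Finset.mem_filter.mp htm
      have e1 : (BBA c i).filter (fun R => x ∈ R) = ∅ := by
        rw [Finset.filter_eq_empty_iff]
        intro R hR hxR
        exact h1 (BBA_subset c i R hR x hxR).1
      have e2 : ((BBA c i).image (shiftTile (2 ^ (c + i)))).filter (fun R => x ∈ R) =
          {shiftTile (2 ^ (c + i)) (tile1 c i (x.1 - 2 ^ (c + i), x.2 - 2 ^ (c + i)) ×ˢ
            tile2 c i (x.1 - 2 ^ (c + i), x.2 - 2 ^ (c + i)))} := by
        ext R
        simp only [Finset.mem_filter, Finset.mem_image, Finset.mem_singleton]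
        constructor
        · rintro ⟨⟨R', hR', rfl⟩, hxR⟩
          rw [mem_shiftTile] at hxR
          have hmem : R' ∈ (BBA c i).filter (fun R => (x.1 - 2 ^ (c + i), x.2 - 2 ^ (c + i)) ∈ R) :=
            Finset.mem_filter.mpr ⟨hR', hxR.2.2⟩
          rw [hsml, Finset.mem_singleton] at hmem
          rw [hmem]
        · rintro rfl
          refine ⟨⟨_, htm2, rfl⟩, ?_⟩
          rw [mem_shiftTile]
          exact ⟨by omega, by omega, hxm⟩
      have e3 : (((Finset.range (2 ^ (c + i))).image
          (fun j => Finset.Ico (2 ^ (c + i)) (2 ^ (c + i + 1)) ×ˢ ({j} : Finset ℕ)))).filter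
          (fun R => x ∈ R) = ∅ := by
        rw [Finset.filter_eq_empty_iff]
        rintro R hR
        obtain ⟨j, hj, rfl⟩ := Finset.mem_image.mp hR
        rw [Finset.mem_range] at hj
        simp only [Finset.mem_product, Finset.mem_Ico, Finset.mem_singleton, true_and, and_true]
        omega
      have e4 : (((Finset.range (2 ^ (c + i))).image
          (fun j => ({j} : Finset ℕ) ×ˢ Finset.Ico (2 ^ (c + i)) (2 ^ (c + i + 1))))).filter
          (fun R => x ∈ R) = ∅ := by
        rw [Finset.filter_eq_empty_iff]
        rintro R hR
        obtain ⟨j, hj, rfl⟩ := Finset.mem_image.mp hR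
        rw [Finset.mem_range] at hj
        simp only [Finset.mem_product, Finset.mem_Ico, Finset.mem_singleton, true_and, and_true]
        omega
      rw [e1, e2, e3, e4, t1, t2, shiftTile_prod]
      simp

lemma tileOf_BBA (c i : ℕ) (x : ℕ × ℕ) (h1 : x.1 < 2 ^ (c + i)) (h2 : x.2 < 2 ^ (c + i)) :
    tileOf (BBA c i) x = tile1 c i x ×ˢ tile2 c i x := by
  rw [tileOf, filter_BBA c i x h1 h2, Finset.sup_singleton]
  rfl

end Stmt15
namespace Stmt15

lemma tile1_subset (c i : ℕ) (x : ℕ × ℕ) (h1 : x.1 < 2 ^ (c + i)) (h2 : x.2 < 2 ^ (c + i)) :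
    tile1 c i x ⊆ Finset.range (2 ^ (c + i)) := by
  induction c generalizing x with
  | zero =>
    have hz : 2 ^ (0 + i) = 2 ^ i := by rw [Nat.zero_add]
    by_cases h : x.2 ≤ x.1 <;> simp only [tile1, h, if_true, if_false, ite_true, ite_false] <;>
      intro y hy <;> simp only [Finset.mem_Ico, Finset.mem_singleton] at hy <;>
      rw [Finset.mem_range] <;> omega
  | succ c ih =>
    have hp := pow_add_one_add c i
    have hp' := pow_succ_add c i
    by_cases hx1 : x.1 < 2 ^ (c + i) <;> by_cases hx2 : x.2 < 2 ^ (c + i) <;>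
      simp only [tile1, hx1, hx2, if_true, if_false, ite_true, ite_false]
    · intro y hy
      have := ih x hx1 hx2 hy
      rw [Finset.mem_range] at this ⊢
      omega
    · intro y hy
      simp only [Finset.mem_singleton] at hy
      rw [Finset.mem_range]; omega
    · intro y hy
      simp only [Finset.mem_Ico] at hy
      rw [Finset.mem_range]; omega
    · intro y hy
      simp only [Finset.mem_image] at hy
      obtain ⟨z, hz, rfl⟩ := hy
      have := ih (x.1 - 2 ^ (c + i), x.2 - 2 ^ (c + i)) (by simp; omega) (by simp; omega) hz
      rw [Finset.mem_range] at this ⊢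
      omega

lemma mem_tile2_self (c i : ℕ) (x : ℕ × ℕ) (h1 : x.1 < 2 ^ (c + i)) (h2 : x.2 < 2 ^ (c + i)) :
    x.2 ∈ tile2 c i x := by
  induction c generalizing x with
  | zero =>
    have hz : 2 ^ (0 + i) = 2 ^ i := by rw [Nat.zero_add]
    by_cases h : x.2 ≤ x.1 <;> simp only [tile2, h, if_true, if_false, ite_true, ite_false] <;>
      simp only [Finset.mem_Ico, Finset.mem_singleton] <;> omega
  | succ c ih =>
    have hp := pow_add_one_add c i
    have hp' := pow_succ_add c i
    by_cases hx2 : x.2 < 2 ^ (c + i) <;> by_cases hx1 : x.1 < 2 ^ (c + i) <;>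
      simp only [tile2, hx1, hx2, if_true, if_false, ite_true, ite_false]
    · exact ih x hx1 hx2
    · simp
    · simp only [Finset.mem_Ico]; omega
    · simp only [Finset.mem_image]
      exact ⟨x.2 - 2 ^ (c + i), ih (x.1 - 2 ^ (c + i), x.2 - 2 ^ (c + i)) (by simp; omega)
        (by simp; omega), by omega⟩

lemma width_card (c i : ℕ) (x : ℕ × ℕ) (h1 : x.1 < 2 ^ (c + i)) (h2 : x.2 < 2 ^ (c + i)) :
    ((Finset.range (2 ^ (c + i))).filter fun y => (y, x.2) ∈ tileOf (BBA c i) x).card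
      = wfun c i x := by
  rw [tileOf_BBA c i x h1 h2]
  have hmem := mem_tile2_self c i x h1 h2
  have hsub := tile1_subset c i x h1 h2
  have key : (Finset.range (2 ^ (c + i))).filter
      (fun y => (y, x.2) ∈ tile1 c i x ×ˢ tile2 c i x) = tile1 c i x := by
    ext y
    simp only [Finset.mem_filter, Finset.mem_product, hmem, and_true, Finset.mem_range]
    exact ⟨fun h => h.2, fun h => ⟨Finset.mem_range.mp (hsub h), h⟩⟩
  rw [key, card_tile1]

lemma num_card (k : ℕ) (x : ℕ × ℕ) (h1 : x.1 < 2 ^ k) (h2 : x.2 < 2 ^ k) :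
    ((Finset.range (2 ^ k)).filter fun y => Auc (y, x.2) = Auc x).card
      = if x.2 ≤ x.1 then 2 ^ k - x.2 else 1 := by
  by_cases h : x.2 ≤ x.1
  · rw [if_pos h]
    have key : (Finset.range (2 ^ k)).filter (fun y => Auc (y, x.2) = Auc x)
        = Finset.Ico x.2 (2 ^ k) := by
      ext y
      simp only [Finset.mem_filter, Finset.mem_range, Finset.mem_Ico, Auc]
      rw [if_pos h]
      constructor
      · rintro ⟨hy, he⟩
        by_cases hy2 : x.2 ≤ y
        · exact ⟨hy2, hy⟩
        · rw [if_neg hy2] at he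
          simp [Prod.ext_iff] at he
      · rintro ⟨hy2, hy⟩
        exact ⟨hy, by rw [if_pos hy2]⟩
    rw [key, Nat.card_Ico]
  · rw [if_neg h]
    have key : (Finset.range (2 ^ k)).filter (fun y => Auc (y, x.2) = Auc x)
        = {x.1} := by
      ext y
      simp only [Finset.mem_filter, Finset.mem_range, Finset.mem_singleton, Auc]
      rw [if_neg h]
      constructor
      · rintro ⟨hy, he⟩
        by_cases hy2 : x.2 ≤ y
        · rw [if_pos hy2] at he
          simp [Prod.ext_iff] at he
        · rw [if_neg hy2] at he
          simpa [Prod.ext_iff] using he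
      · rintro rfl
        exact ⟨by omega, by rw [if_neg (by omega)]⟩
    rw [key, Finset.card_singleton]

lemma term_eq (c i : ℕ) (x : ℕ × ℕ) (h1 : x.1 < 2 ^ (c + i)) (h2 : x.2 < 2 ^ (c + i)) :
    (((Finset.range (2 ^ (c + i))).filter fun y => Auc (y, x.2) = Auc x).card : ℚ) /
      (((Finset.range (2 ^ (c + i))).filter fun y => (y, x.2) ∈ tileOf (BBA c i) x).card : ℚ)
    = (if x.2 ≤ x.1 then (2 ^ (c + i) : ℚ) - (x.2 : ℚ) else 1) / (wfun c i x : ℚ) := by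
  rw [num_card _ x h1 h2, width_card c i x h1 h2]
  by_cases h : x.2 ≤ x.1
  · rw [if_pos h, if_pos h, Nat.cast_sub (le_of_lt h2)]
    push_cast
    ring
  · rw [if_neg h, if_neg h]
    norm_num

end Stmt15
namespace Stmt15

/-- The main sum. -/
def Fsum (c i : ℕ) : ℚ :=
  ∑ x ∈ Vk (c + i), (if x.2 ≤ x.1 then (2 ^ (c + i) : ℚ) - (x.2 : ℚ) else 1) / (wfun c i x : ℚ)

/-- The auxiliary sum. -/
def Gsum (c i : ℕ) : ℚ :=
  ∑ x ∈ Vk (c + i), (if x.2 ≤ x.1 then 1 / (wfun c i x : ℚ) else 0)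

lemma sum_range_split (k : ℕ) (g : ℕ → ℚ) :
    ∑ a ∈ Finset.range (2 ^ (k + 1)), g a
      = ∑ a ∈ Finset.range (2 ^ k), g a + ∑ a ∈ Finset.range (2 ^ k), g (a + 2 ^ k) := by
  have h : 2 ^ (k + 1) = 2 ^ k + 2 ^ k := by rw [pow_succ]; omega
  have h2 : ∑ a ∈ Finset.range (2 ^ k), g (a + 2 ^ k)
      = ∑ a ∈ Finset.Ico (2 ^ k) (2 ^ k + 2 ^ k), g a := by
    rw [Finset.sum_Ico_eq_sum_range]
    rw [Nat.add_sub_cancel]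
    exact Finset.sum_congr rfl fun a _ => by rw [add_comm]
  rw [h, h2, Finset.range_eq_Ico, Finset.range_eq_Ico,
    Finset.sum_Ico_consecutive g (Nat.zero_le (2 ^ k)) (Nat.le_add_right _ _)]

lemma sum_Vk_succ (k : ℕ) (f : ℕ × ℕ → ℚ) :
    ∑ x ∈ Vk (k + 1), f x
      = ∑ x ∈ Vk k, f x + ∑ x ∈ Vk k, f (x.1 + 2 ^ k, x.2 + 2 ^ k)
        + ∑ x ∈ Vk k, f (x.1 + 2 ^ k, x.2) + ∑ x ∈ Vk k, f (x.1, x.2 + 2 ^ k) := by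
  simp only [Vk, Finset.sum_product]
  rw [sum_range_split]
  have h1 : ∀ a : ℕ, ∑ b ∈ Finset.range (2 ^ (k + 1)), f (a, b)
      = ∑ b ∈ Finset.range (2 ^ k), f (a, b) + ∑ b ∈ Finset.range (2 ^ k), f (a, b + 2 ^ k) :=
    fun a => sum_range_split k (fun b => f (a, b))
  rw [Finset.sum_congr rfl (fun a _ => h1 a), Finset.sum_congr rfl (fun a _ => h1 (a + 2 ^ k)),
    Finset.sum_add_distrib, Finset.sum_add_distrib]
  ring

lemma card_Vk (k : ℕ) : (Vk k).card = 2 ^ k * 2 ^ k := by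
  rw [Vk, Finset.card_product, Finset.card_range]

lemma sum_range_cast (n : ℕ) : ∑ j ∈ Finset.range n, (j : ℚ) = n * ((n : ℚ) - 1) / 2 := by
  induction n with
  | zero => simp
  | succ n ih =>
    rw [Finset.sum_range_succ, ih]
    push_cast
    ring

lemma sum_x2 (k : ℕ) : ∑ x ∈ Vk k, (x.2 : ℚ) = 2 ^ k * (2 ^ k * ((2 ^ k : ℚ) - 1) / 2) := by
  simp only [Vk, Finset.sum_product]
  rw [Finset.sum_const, sum_range_cast, Finset.card_range, nsmul_eq_mul]
  push_cast
  ring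

lemma Gsum_succ (c i : ℕ) : Gsum (c + 1) i = 2 * Gsum c i + 2 ^ (c + i) := by
  have hp := pow_add_one_add c i
  have e : c + 1 + i = (c + i) + 1 := by omega
  unfold Gsum
  rw [e, sum_Vk_succ]
  have hbound : ∀ x ∈ Vk (c + i), x.1 < 2 ^ (c + i) ∧ x.2 < 2 ^ (c + i) := by
    intro x hx
    rwa [Vk, Finset.mem_product, Finset.mem_range, Finset.mem_range] at hx
  have hLL : ∑ x ∈ Vk (c + i), (if x.2 ≤ x.1 then 1 / (wfun (c + 1) i x : ℚ) else 0)
      = ∑ x ∈ Vk (c + i), (if x.2 ≤ x.1 then 1 / (wfun c i x : ℚ) else 0) := by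
    refine Finset.sum_congr rfl fun x hx => ?_
    obtain ⟨h1, h2⟩ := hbound x hx
    rw [show wfun (c + 1) i x = wfun c i x by simp [wfun, h1, h2]]
  have hUR : ∑ x ∈ Vk (c + i),
      (if (x.1 + 2 ^ (c + i), x.2 + 2 ^ (c + i)).2 ≤ (x.1 + 2 ^ (c + i), x.2 + 2 ^ (c + i)).1
        then 1 / (wfun (c + 1) i (x.1 + 2 ^ (c + i), x.2 + 2 ^ (c + i)) : ℚ) else 0)
      = ∑ x ∈ Vk (c + i), (if x.2 ≤ x.1 then 1 / (wfun c i x : ℚ) else 0) := by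
    refine Finset.sum_congr rfl fun x hx => ?_
    obtain ⟨h1, h2⟩ := hbound x hx
    have hw : wfun (c + 1) i (x.1 + 2 ^ (c + i), x.2 + 2 ^ (c + i)) = wfun c i x := by
      simp [wfun, show ¬ x.1 + 2 ^ (c + i) < 2 ^ (c + i) from by omega,
        show ¬ x.2 + 2 ^ (c + i) < 2 ^ (c + i) from by omega]
    dsimp only
    rw [hw]
    by_cases hc : x.2 ≤ x.1
    · rw [if_pos (show x.2 + 2 ^ (c + i) ≤ x.1 + 2 ^ (c + i) from by omega), if_pos hc]
    · rw [if_neg (show ¬ x.2 + 2 ^ (c + i) ≤ x.1 + 2 ^ (c + i) from by omega), if_neg hc]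
  have hLR : ∑ x ∈ Vk (c + i),
      (if (x.1 + 2 ^ (c + i), x.2).2 ≤ (x.1 + 2 ^ (c + i), x.2).1
        then 1 / (wfun (c + 1) i (x.1 + 2 ^ (c + i), x.2) : ℚ) else 0)
      = 2 ^ (c + i) := by
    have step : ∀ x ∈ Vk (c + i),
        (if (x.1 + 2 ^ (c + i), x.2).2 ≤ (x.1 + 2 ^ (c + i), x.2).1
          then 1 / (wfun (c + 1) i (x.1 + 2 ^ (c + i), x.2) : ℚ) else 0)
        = 1 / (2 ^ (c + i) : ℚ) := by
      intro x hx
      obtain ⟨h1, h2⟩ := hbound x hx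
      have hw : wfun (c + 1) i (x.1 + 2 ^ (c + i), x.2) = 2 ^ (c + i) := by
        simp [wfun, show ¬ x.1 + 2 ^ (c + i) < 2 ^ (c + i) from by omega, h2]
      rw [if_pos (by simp; omega), hw]
      push_cast
      ring
    rw [Finset.sum_congr rfl step, Finset.sum_const, card_Vk, nsmul_eq_mul]
    push_cast
    have hne : (2 : ℚ) ^ (c + i) ≠ 0 := by positivity
    field_simp
  have hUL : ∑ x ∈ Vk (c + i),
      (if (x.1, x.2 + 2 ^ (c + i)).2 ≤ (x.1, x.2 + 2 ^ (c + i)).1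
        then 1 / (wfun (c + 1) i (x.1, x.2 + 2 ^ (c + i)) : ℚ) else 0)
      = 0 := by
    refine Finset.sum_eq_zero fun x hx => ?_
    obtain ⟨h1, h2⟩ := hbound x hx
    rw [if_neg (by simp; omega)]
  rw [hLL, hUR, hLR, hUL]
  ring

lemma Fsum_succ (c i : ℕ) :
    Fsum (c + 1) i = 2 * Fsum c i + 2 ^ (c + i) * Gsum c i
      + (3 * ((2 : ℚ) ^ (c + i) * 2 ^ (c + i)) + 2 ^ (c + i)) / 2
      + (2 : ℚ) ^ (c + i) * 2 ^ (c + i) := by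
  have hp := pow_add_one_add c i
  have e : c + 1 + i = (c + i) + 1 := by omega
  unfold Fsum
  rw [e, sum_Vk_succ]
  have hbound : ∀ x ∈ Vk (c + i), x.1 < 2 ^ (c + i) ∧ x.2 < 2 ^ (c + i) := by
    intro x hx
    rwa [Vk, Finset.mem_product, Finset.mem_range, Finset.mem_range] at hx
  have hne : (2 : ℚ) ^ (c + i) ≠ 0 := by positivity
  have hLL : ∑ x ∈ Vk (c + i),
      (if x.2 ≤ x.1 then (2 ^ ((c + i) + 1) : ℚ) - (x.2 : ℚ) else 1) / (wfun (c + 1) i x : ℚ)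
      = (∑ x ∈ Vk (c + i),
          (if x.2 ≤ x.1 then (2 ^ (c + i) : ℚ) - (x.2 : ℚ) else 1) / (wfun c i x : ℚ))
        + 2 ^ (c + i) * Gsum c i := by
    rw [Gsum, Finset.mul_sum, ← Finset.sum_add_distrib]
    refine Finset.sum_congr rfl fun x hx => ?_
    obtain ⟨h1, h2⟩ := hbound x hx
    rw [show wfun (c + 1) i x = wfun c i x by simp [wfun, h1, h2]]
    by_cases hc : x.2 ≤ x.1
    · rw [if_pos hc, if_pos hc, if_pos hc,
        show (2 ^ ((c + i) + 1) : ℚ) - (x.2 : ℚ)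
          = ((2 ^ (c + i) : ℚ) - (x.2 : ℚ)) + 2 ^ (c + i) from by ring,
        add_div]
      ring
    · rw [if_neg hc, if_neg hc, if_neg hc]
      ring
  have hUR : ∑ x ∈ Vk (c + i),
      (if (x.1 + 2 ^ (c + i), x.2 + 2 ^ (c + i)).2 ≤ (x.1 + 2 ^ (c + i), x.2 + 2 ^ (c + i)).1
        then (2 ^ ((c + i) + 1) : ℚ) - ((x.2 + 2 ^ (c + i) : ℕ) : ℚ) else 1)
        / (wfun (c + 1) i (x.1 + 2 ^ (c + i), x.2 + 2 ^ (c + i)) : ℚ)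
      = ∑ x ∈ Vk (c + i),
          (if x.2 ≤ x.1 then (2 ^ (c + i) : ℚ) - (x.2 : ℚ) else 1) / (wfun c i x : ℚ) := by
    refine Finset.sum_congr rfl fun x hx => ?_
    obtain ⟨h1, h2⟩ := hbound x hx
    have hw : wfun (c + 1) i (x.1 + 2 ^ (c + i), x.2 + 2 ^ (c + i)) = wfun c i x := by
      simp [wfun, show ¬ x.1 + 2 ^ (c + i) < 2 ^ (c + i) from by omega,
        show ¬ x.2 + 2 ^ (c + i) < 2 ^ (c + i) from by omega]
    dsimp only
    rw [hw]
    by_cases hc : x.2 ≤ x.1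
    · rw [if_pos (show x.2 + 2 ^ (c + i) ≤ x.1 + 2 ^ (c + i) from by omega), if_pos hc]
      congr 1
      push_cast
      ring
    · rw [if_neg (show ¬ x.2 + 2 ^ (c + i) ≤ x.1 + 2 ^ (c + i) from by omega), if_neg hc]
  have hLR : ∑ x ∈ Vk (c + i),
      (if (x.1 + 2 ^ (c + i), x.2).2 ≤ (x.1 + 2 ^ (c + i), x.2).1
        then (2 ^ ((c + i) + 1) : ℚ) - ((x.2 : ℕ) : ℚ) else 1)
        / (wfun (c + 1) i (x.1 + 2 ^ (c + i), x.2) : ℚ)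
      = (3 * ((2 : ℚ) ^ (c + i) * 2 ^ (c + i)) + 2 ^ (c + i)) / 2 := by
    have step : ∀ x ∈ Vk (c + i),
        (if (x.1 + 2 ^ (c + i), x.2).2 ≤ (x.1 + 2 ^ (c + i), x.2).1
          then (2 ^ ((c + i) + 1) : ℚ) - ((x.2 : ℕ) : ℚ) else 1)
          / (wfun (c + 1) i (x.1 + 2 ^ (c + i), x.2) : ℚ)
        = ((2 ^ ((c + i) + 1) : ℚ) - (x.2 : ℚ)) / (2 ^ (c + i) : ℚ) := by
      intro x hx
      obtain ⟨h1, h2⟩ := hbound x hx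
      have hw : wfun (c + 1) i (x.1 + 2 ^ (c + i), x.2) = 2 ^ (c + i) := by
        simp [wfun, show ¬ x.1 + 2 ^ (c + i) < 2 ^ (c + i) from by omega, h2]
      rw [if_pos (by simp; omega), hw]
      push_cast
      ring
    rw [Finset.sum_congr rfl step, ← Finset.sum_div, Finset.sum_sub_distrib,
      Finset.sum_const, card_Vk, nsmul_eq_mul, sum_x2]
    push_cast
    field_simp
    ring
  have hUL : ∑ x ∈ Vk (c + i),
      (if (x.1, x.2 + 2 ^ (c + i)).2 ≤ (x.1, x.2 + 2 ^ (c + i)).1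
        then (2 ^ ((c + i) + 1) : ℚ) - ((x.2 + 2 ^ (c + i) : ℕ) : ℚ) else 1)
        / (wfun (c + 1) i (x.1, x.2 + 2 ^ (c + i)) : ℚ)
      = (2 : ℚ) ^ (c + i) * 2 ^ (c + i) := by
    have step : ∀ x ∈ Vk (c + i),
        (if (x.1, x.2 + 2 ^ (c + i)).2 ≤ (x.1, x.2 + 2 ^ (c + i)).1
          then (2 ^ ((c + i) + 1) : ℚ) - ((x.2 + 2 ^ (c + i) : ℕ) : ℚ) else 1)
          / (wfun (c + 1) i (x.1, x.2 + 2 ^ (c + i)) : ℚ)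
        = 1 := by
      intro x hx
      obtain ⟨h1, h2⟩ := hbound x hx
      have hw : wfun (c + 1) i (x.1, x.2 + 2 ^ (c + i)) = 1 := by
        simp [wfun, h1, show ¬ x.2 + 2 ^ (c + i) < 2 ^ (c + i) from by omega]
      rw [if_neg (by simp; omega), hw]
      norm_num
    rw [Finset.sum_congr rfl step, Finset.sum_const, card_Vk, nsmul_eq_mul]
    push_cast
    ring
  rw [hLL, hUR, hLR, hUL]
  ring

end Stmt15
namespace Stmt15

lemma Gsum_zero (i : ℕ) : Gsum 0 i = 2 ^ i := by
  unfold Gsum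
  have hz : (0 : ℕ) + i = i := Nat.zero_add i
  rw [hz]
  simp only [Vk]
  rw [Finset.sum_product_right]
  have inner : ∀ b ∈ Finset.range (2 ^ i),
      ∑ a ∈ Finset.range (2 ^ i), (if (a, b).2 ≤ (a, b).1 then 1 / (wfun 0 i (a, b) : ℚ) else 0)
      = 1 := by
    intro b hb
    rw [Finset.mem_range] at hb
    have step : ∀ a ∈ Finset.range (2 ^ i),
        (if (a, b).2 ≤ (a, b).1 then 1 / (wfun 0 i (a, b) : ℚ) else 0)
        = (if b ≤ a then 1 / (((2 ^ i - b : ℕ) : ℕ) : ℚ) else 0) := by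
      intro a _
      dsimp only
      by_cases h : b ≤ a
      · rw [if_pos h, if_pos h]
        have hw : wfun 0 i (a, b) = 2 ^ i - b := by simp [wfun, h]
        rw [hw]
      · rw [if_neg h, if_neg h]
    rw [Finset.sum_congr rfl step, ← Finset.sum_filter,
      show (Finset.range (2 ^ i)).filter (fun a => b ≤ a) = Finset.Ico b (2 ^ i) from by
        ext a; simp [Finset.mem_Ico]; omega,
      Finset.sum_const, Nat.card_Ico, nsmul_eq_mul]
    have hne : ((2 ^ i - b : ℕ) : ℚ) ≠ 0 := by
      have : 0 < 2 ^ i - b := by omega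
      exact_mod_cast this.ne'
    rw [mul_one_div, div_self hne]
  rw [Finset.sum_congr rfl inner, Finset.sum_const, Finset.card_range, nsmul_eq_mul, mul_one]
  push_cast
  ring

lemma Fsum_zero (i : ℕ) : Fsum 0 i = 2 ^ i * 2 ^ i := by
  unfold Fsum
  have hz : (0 : ℕ) + i = i := Nat.zero_add i
  rw [hz]
  have step : ∀ x ∈ Vk i,
      (if x.2 ≤ x.1 then (2 ^ i : ℚ) - (x.2 : ℚ) else 1) / (wfun 0 i x : ℚ) = 1 := by
    intro x hx
    rw [Vk, Finset.mem_product, Finset.mem_range, Finset.mem_range] at hx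
    by_cases h : x.2 ≤ x.1
    · rw [if_pos h]
      have hw : wfun 0 i x = 2 ^ i - x.2 := by simp [wfun, h]
      rw [hw]
      have hne : ((2 ^ i - x.2 : ℕ) : ℚ) ≠ 0 := by
        have : 0 < 2 ^ i - x.2 := by omega
        exact_mod_cast this.ne'
      rw [show (2 ^ i : ℚ) - (x.2 : ℚ) = ((2 ^ i - x.2 : ℕ) : ℚ) from by
        rw [Nat.cast_sub (by omega : x.2 ≤ 2 ^ i)]; push_cast; ring]
      exact div_self hne
    · rw [if_neg h]
      have hw : wfun 0 i x = 1 := by simp [wfun, h]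
      rw [hw]
      norm_num
  rw [Finset.sum_congr rfl step, Finset.sum_const, card_Vk, nsmul_eq_mul, mul_one]
  push_cast
  ring

lemma Gsum_eq (c i : ℕ) : Gsum c i = ((c : ℚ) + 2) * 2 ^ (c + i) / 2 := by
  induction c with
  | zero =>
    rw [Gsum_zero]
    rw [Nat.zero_add]
    push_cast
    ring
  | succ c ih =>
    rw [Gsum_succ, ih, show c + 1 + i = (c + i) + 1 from by omega, pow_succ]
    push_cast
    ring

lemma Fsum_eq (c i : ℕ) :
    Fsum c i = ((c : ℚ) + 5) * ((2 : ℚ) ^ (c + i) * 2 ^ (c + i)) / 4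
      - ((2 : ℚ) ^ (c + i) * 2 ^ (c + i)) / 2 ^ (c + 2) + (c : ℚ) * 2 ^ (c + i) / 4 := by
  induction c with
  | zero =>
    rw [Fsum_zero, Nat.zero_add]
    push_cast
    norm_num
    ring
  | succ c ih =>
    rw [Fsum_succ, ih, Gsum_eq, show c + 1 + i = (c + i) + 1 from by omega, pow_succ,
      show c + 1 + 2 = (c + 2) + 1 from by omega, pow_succ]
    have h1 : (2 : ℚ) ^ (c + i) ≠ 0 := by positivity
    have h2 : (2 : ℚ) ^ (c + 2) ≠ 0 := by positivity
    push_cast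
    field_simp
    ring

end Stmt15

/-- with `k = c + i`, the average-case PAR with respect to
party 2 of `T_{c,i}` for `A_k` equals `(c+5)/4 − 1/2^{c+2} + c/2^{k+2}`. -/
theorem stmt15 (c i : ℕ) :
    avgPAR2 (c + i) Auc (BBA c i) =
      ((c : ℚ) + 5) / 4 - 1 / 2 ^ (c + 2) + (c : ℚ) / 2 ^ (c + i + 2) := by
  rw [avgPAR2]
  have hsum : (∑ x ∈ Vk (c + i),
      (((Finset.range (2 ^ (c + i))).filter fun y => Auc (y, x.2) = Auc x).card : ℚ) /
        (((Finset.range (2 ^ (c + i))).filter fun y => (y, x.2) ∈ tileOf (BBA c i) x).card : ℚ))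
      = Stmt15.Fsum c i := by
    unfold Stmt15.Fsum
    refine Finset.sum_congr rfl fun x hx => ?_
    rw [Vk, Finset.mem_product, Finset.mem_range, Finset.mem_range] at hx
    exact Stmt15.term_eq c i x hx.1 hx.2
  rw [hsum, Stmt15.Fsum_eq, two_mul, pow_add]
  have hA : (2 : ℚ) ^ (c + i) ≠ 0 := by positivity
  have hB : (2 : ℚ) ^ (c + 2) ≠ 0 := by positivity
  have hC : (2 : ℚ) ^ (c + i + 2) ≠ 0 := by positivity
  field_simp
  ring
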